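/- Let 𝔠 : C ⥤ B be a functor and let p : P ⟶ Q be a morphism in C lying over f : A ⟶ B. Then p is cocartesian if and only if for every object R in the fiber over B, composition with p induces a bijection from morphisms Q ⟶ R in the fiber over B to morphisms P ⟶ R lying over f — provided 𝔠 is a fibration. -/
import Mathlib


open CategoryTheory Functor Category

/-- For a fibration `𝔠`, a morphism `p : P ⟶ Q` over `f : A ⟶ B` is cocartesian iff for every
object `R` in the fiber over `B`, composition with `p` gives a bijection from vertical morphisms
`Q ⟶ R` to morphisms `P ⟶ R` over `f`. -/
theorem stmt5 {𝒮 𝒞 : Type*} [Category 𝒮] [Category 𝒞] (𝔠 : 𝒞 ⥤ 𝒮) [𝔠.IsFibered]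
    {A B : 𝒮} {P Q : 𝒞} (f : A ⟶ B) (p : P ⟶ Q) [𝔠.IsHomLift f p] :
    𝔠.IsStronglyCocartesian f p ↔
      ∀ (R : 𝒞), 𝔠.obj R = B →
        Function.Bijective (fun r : {r : Q ⟶ R // 𝔠.IsHomLift (𝟙 B) r} =>
          (⟨p ≫ r.1, by haveI := r.2; infer_instance⟩ :
            {s : P ⟶ R // 𝔠.IsHomLift f s})) := by
  constructor
  · intro hp R hR
    constructor
    · rintro ⟨r₁, h₁⟩ ⟨r₂, h₂⟩ h
      have h' : p ≫ r₁ = p ≫ r₂ := congrArg Subtype.val h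
      exact Subtype.ext (IsStronglyCocartesian.ext 𝔠 f p (𝟙 B) h')
    · rintro ⟨s, hs⟩
      let χ := IsStronglyCocartesian.map 𝔠 f p (comp_id f).symm s
      exact ⟨⟨χ, inferInstance⟩, Subtype.ext (IsStronglyCocartesian.fac 𝔠 f p (comp_id f).symm s)⟩
  · intro h
    constructor
    intro b' g φ' hφ'
    -- take a strongly cartesian lift `χ'` of `g` with codomain `b'`
    let R := IsPreFibered.pullbackObj (p := 𝔠) rfl g
    let χ' : R ⟶ b' := IsPreFibered.pullbackMap (p := 𝔠) rfl g
    haveI : 𝔠.IsStronglyCartesian g χ' := inferInstance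
    have hR : 𝔠.obj R = B := IsPreFibered.pullbackObj_proj rfl g
    -- factor `φ'` through `χ'`
    let τ : P ⟶ R := IsStronglyCartesian.map 𝔠 g χ' (f' := f ≫ g) rfl φ'
    haveI : 𝔠.IsHomLift f τ := inferInstance
    obtain ⟨r, hr⟩ := (h R hR).2 ⟨τ, inferInstance⟩
    have hr' : p ≫ r.1 = τ := congrArg Subtype.val hr
    haveI := r.2
    refine ⟨r.1 ≫ χ', ⟨?_, ?_⟩, ?_⟩
    · have : 𝔠.IsHomLift (𝟙 B ≫ g) (r.1 ≫ χ') := inferInstance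
      rwa [id_comp] at this
    · rw [← assoc, hr', IsStronglyCartesian.fac]
    · rintro π ⟨hπ₁, hπ₂⟩
      let r' : Q ⟶ R := IsStronglyCartesian.map 𝔠 g χ' (id_comp g).symm π
      haveI : 𝔠.IsHomLift (𝟙 B) r' := inferInstance
      have hfac : r' ≫ χ' = π := IsStronglyCartesian.fac 𝔠 g χ' _ π
      have hlift : 𝔠.IsHomLift f (p ≫ r') := by
        have : 𝔠.IsHomLift (f ≫ 𝟙 B) (p ≫ r') := inferInstance
        rwa [comp_id] at this
      have heq : p ≫ r' = τ := by
        haveI := hlift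
        apply IsStronglyCartesian.ext 𝔠 g χ' f
        rw [assoc, hfac, hπ₂]; exact (IsStronglyCartesian.fac 𝔠 g χ' rfl φ').symm
      have : (⟨r', inferInstance⟩ : {r : Q ⟶ R // 𝔠.IsHomLift (𝟙 B) r}) = r := by
        apply (h R hR).1
        exact Subtype.ext (by simp [heq, hr'])
      rw [← hfac, ← this]
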